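/- Let n ≥ 1, let g : ℝⁿ → ℝ be continuously differentiable, let x ∈ S^{n−1}, let σ ∈ (0,1), and set η = −Proj_x(∇g(x)) = −(∇g(x) − ⟨∇g(x), x⟩x). Then there exists α > 0 such that for all t ∈ (0, α), g((x + tη)/‖x + tη‖) ≤ g(x) − t σ ‖η‖². In particular, the Armijo backtracking line search along the retraction R_x(ξ) = (x + ξ)/‖x + ξ‖ with search direction η is well defined: for any β ∈ (0,1) and ᾱ > 0 there is a smallest nonnegative integer m with g((x + β^m ᾱ η)/‖x + β^m ᾱ η‖) ≤ g(x) − σ β^m ᾱ ‖η‖². -/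

import Mathlib

open Filter Topology

/-- The orthogonal projection onto the tangent space of the unit sphere at `x`:
`Proj_x(v) = v − ⟨v, x⟩x`. -/
noncomputable def sphereProj {n : ℕ} (x v : EuclideanSpace ℝ (Fin n)) :
    EuclideanSpace ℝ (Fin n) :=
  v - (inner ℝ v x : ℝ) • x

/-- Let `g : ℝⁿ → ℝ` be continuously differentiable, `x ∈ S^{n−1}`, `σ ∈ (0,1)`, and
`η = −Proj_x(∇g(x))`. Then (i) there exists `α > 0` such that for all `t ∈ (0, α)`,
`g((x + tη)/‖x + tη‖) ≤ g(x) − tσ‖η‖²`; and (ii) the Armijo backtracking line search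
along the retraction `R_x(ξ) = (x + ξ)/‖x + ξ‖` is well defined: for any `β ∈ (0,1)`
and `ᾱ > 0` there is a smallest nonnegative integer `m` with
`g((x + βᵐᾱη)/‖x + βᵐᾱη‖) ≤ g(x) − σβᵐᾱ‖η‖²`. -/
theorem armijo_line_search_well_defined (n : ℕ) (hn : 1 ≤ n)
    (g : EuclideanSpace ℝ (Fin n) → ℝ) (hg : ContDiff ℝ 1 g)
    (x : EuclideanSpace ℝ (Fin n)) (hx : ‖x‖ = 1)
    (σ : ℝ) (hσ0 : 0 < σ) (hσ1 : σ < 1)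
    (η : EuclideanSpace ℝ (Fin n)) (hη : η = -sphereProj x (gradient g x)) :
    (∃ α > (0 : ℝ), ∀ t : ℝ, 0 < t → t < α →
      g ((‖x + t • η‖)⁻¹ • (x + t • η)) ≤ g x - t * σ * ‖η‖ ^ 2) ∧
    ∀ β : ℝ, 0 < β → β < 1 → ∀ abar : ℝ, 0 < abar →
      ∃ m : ℕ,
        (g ((‖x + (β ^ m * abar) • η‖)⁻¹ • (x + (β ^ m * abar) • η)) ≤
          g x - σ * (β ^ m * abar) * ‖η‖ ^ 2) ∧
        ∀ j : ℕ, j < m →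
          ¬ (g ((‖x + (β ^ j * abar) • η‖)⁻¹ • (x + (β ^ j * abar) • η)) ≤
            g x - σ * (β ^ j * abar) * ‖η‖ ^ 2) := by
  classical
  set G := gradient g x with hG
  have hxx : (inner ℝ x x : ℝ) = 1 := by
    rw [real_inner_self_eq_norm_sq, hx]; norm_num
  have hxη : (inner ℝ x η : ℝ) = 0 := by
    rw [hη, sphereProj]
    simp [inner_sub_right, inner_smul_right, hxx, real_inner_comm x G, hx]
  have hd : (inner ℝ G η : ℝ) = -‖η‖ ^ 2 := by
    have hη2 : ‖η‖ ^ 2 = (inner ℝ η η : ℝ) := (real_inner_self_eq_norm_sq η).symm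
    rw [hη2, hη, sphereProj]
    simp only [inner_neg_right, inner_neg_left, inner_sub_left, inner_sub_right,
      inner_smul_left, inner_smul_right, hxx, real_inner_comm x G, RCLike.star_def,
      conj_trivial, neg_neg, neg_sub]
    ring
  set φ : ℝ → ℝ := fun t => g ((‖x + t • η‖)⁻¹ • (x + t • η)) with hφ
  have hN : ∀ t : ℝ, ‖x + t • η‖ = Real.sqrt (1 + t ^ 2 * ‖η‖ ^ 2) := by
    intro t
    have hsq : ‖x + t • η‖ ^ 2 = 1 + t ^ 2 * ‖η‖ ^ 2 := by
      rw [norm_add_sq_real]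
      simp [inner_smul_right, hxη, norm_smul, hx]
      rw [mul_pow, sq_abs]
    rw [← hsq, Real.sqrt_sq (norm_nonneg _)]
  have hφ0 : φ 0 = g x := by simp [hφ, hx]
  -- the derivative of φ at 0 is ⟪G, η⟫ = -‖η‖²
  have hc : HasDerivAt (fun t : ℝ => x + t • η) η 0 := by
    simpa using ((hasDerivAt_id (0:ℝ)).smul_const η).const_add x
  have hu : HasDerivAt (fun t : ℝ => 1 + t ^ 2 * ‖η‖ ^ 2) 0 0 := by
    simpa using ((hasDerivAt_pow 2 (0:ℝ)).mul_const (‖η‖ ^ 2)).const_add 1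
  have h1 : HasDerivAt (fun t : ℝ => Real.sqrt (1 + t ^ 2 * ‖η‖ ^ 2)) 0 0 := by
    have := hu.sqrt (by norm_num)
    simpa using this
  have hs : HasDerivAt (fun t : ℝ => (Real.sqrt (1 + t ^ 2 * ‖η‖ ^ 2))⁻¹) 0 0 := by
    have := h1.inv (by simp)
    exact this.congr_deriv (by simp)
  have hr : HasDerivAt (fun t : ℝ => (‖x + t • η‖)⁻¹ • (x + t • η)) η 0 := by
    have h2 : HasDerivAt (fun t : ℝ => (Real.sqrt (1 + t ^ 2 * ‖η‖ ^ 2))⁻¹ • (x + t • η))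
        ((Real.sqrt (1 + (0:ℝ) ^ 2 * ‖η‖ ^ 2))⁻¹ • η + (0:ℝ) • (x + (0:ℝ) • η)) 0 := hs.smul hc
    have heq : (fun t : ℝ => (‖x + t • η‖)⁻¹ • (x + t • η)) =
        fun t : ℝ => (Real.sqrt (1 + t ^ 2 * ‖η‖ ^ 2))⁻¹ • (x + t • η) := by
      funext t; rw [hN t]
    rw [heq]
    convert h2 using 1
    simp
  have hgd : HasFDerivAt g (fderiv ℝ g x) x :=
    (hg.differentiable one_ne_zero x).hasFDerivAt
  have hgd' : HasFDerivAt g (fderiv ℝ g x)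
      ((fun t : ℝ => (‖x + t • η‖)⁻¹ • (x + t • η)) 0) := by
    have hx0 : (fun t : ℝ => (‖x + t • η‖)⁻¹ • (x + t • η)) 0 = x := by simp [hx]
    rw [hx0]; exact hgd
  have hcomp : HasDerivAt φ (fderiv ℝ g x η) 0 := hgd'.comp_hasDerivAt 0 hr
  have hfg : fderiv ℝ g x η = (inner ℝ G η : ℝ) := by
    have : fderiv ℝ g x = InnerProductSpace.toDual ℝ _ G := by
      rw [hG, gradient, LinearIsometryEquiv.apply_symm_apply]
    rw [this, InnerProductSpace.toDual_apply_apply]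
  have hderiv : HasDerivAt φ (-‖η‖ ^ 2) 0 := by rwa [hfg, hd] at hcomp
  -- Part (i)
  have hi : ∃ α > (0 : ℝ), ∀ t : ℝ, 0 < t → t < α →
      g ((‖x + t • η‖)⁻¹ • (x + t • η)) ≤ g x - t * σ * ‖η‖ ^ 2 := by
    by_cases h0 : η = 0
    · exact ⟨1, one_pos, fun t _ _ => by simp [h0, hx]⟩
    · have hηpos : 0 < ‖η‖ := norm_pos_iff.mpr h0
      have hη2 : 0 < ‖η‖ ^ 2 := by positivity
      have hlt : -‖η‖ ^ 2 < -(σ * ‖η‖ ^ 2) := by nlinarith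
      have hslope := hasDerivAt_iff_tendsto_slope.mp hderiv
      have hslope' : Tendsto (slope φ 0) (𝓝[>] 0) (𝓝 (-‖η‖ ^ 2)) :=
        hslope.mono_left (nhdsWithin_mono 0 fun y hy => ne_of_gt hy)
      have hev : ∀ᶠ t in 𝓝[>] (0:ℝ), slope φ 0 t < -(σ * ‖η‖ ^ 2) :=
        hslope'.eventually_lt_const hlt
      obtain ⟨α, hα, hIoo⟩ := mem_nhdsGT_iff_exists_Ioo_subset.mp hev
      refine ⟨α, hα, fun t ht1 ht2 => ?_⟩
      have hsl : slope φ 0 t < -(σ * ‖η‖ ^ 2) := hIoo ⟨ht1, ht2⟩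
      rw [slope_def_field, hφ0, sub_zero, div_lt_iff₀ ht1] at hsl
      show φ t ≤ g x - t * σ * ‖η‖ ^ 2
      nlinarith
  refine ⟨hi, ?_⟩
  intro β hβ0 hβ1 abar habar
  obtain ⟨α, hα, hmain⟩ := hi
  set P : ℕ → Prop := fun m =>
    g ((‖x + (β ^ m * abar) • η‖)⁻¹ • (x + (β ^ m * abar) • η)) ≤
      g x - σ * (β ^ m * abar) * ‖η‖ ^ 2 with hP
  have hex : ∃ m, P m := by
    have htend : Tendsto (fun m : ℕ => β ^ m * abar) atTop (𝓝 0) := by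
      simpa using
        (tendsto_pow_atTop_nhds_zero_of_lt_one hβ0.le hβ1).mul_const abar
    obtain ⟨m, hm⟩ := (htend.eventually_lt_const hα).exists
    refine ⟨m, ?_⟩
    have htpos : 0 < β ^ m * abar := by positivity
    have h := hmain _ htpos hm
    calc g ((‖x + (β ^ m * abar) • η‖)⁻¹ • (x + (β ^ m * abar) • η)) ≤
          g x - (β ^ m * abar) * σ * ‖η‖ ^ 2 := h
      _ = g x - σ * (β ^ m * abar) * ‖η‖ ^ 2 := by ring
  exact ⟨Nat.find hex, Nat.find_spec hex, fun j hj => Nat.find_min hex hj⟩
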